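/- Suppose for each level ℓ = 1,...,c, vectors satisfy ‖S_{ℓ-1} Π⊥_ℓ x_{ℓ-1}‖₂ ≤ σ_ℓ ‖S_{ℓ-1} x_{ℓ-1}‖₂, where x_ℓ = P_ℓ x_{ℓ-1}, Π_ℓ = P_ℓ^+P_ℓ, Π⊥_ℓ = I − Π_ℓ, and S_ℓ satisfies ‖S_ℓ x_ℓ‖₂ = ‖S_{ℓ-1} Π_ℓ x_{ℓ-1}‖₂. Then the end-to-end error satisfies ‖S₀ x₀ − S_c x_c‖₂ ≤ (∏_{ℓ=1}^c (1 + σ_ℓ) − 1) ‖S₀ x₀‖₂. -/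

import Mathlib

open Matrix Finset

/-- The four Penrose conditions characterizing the Moore–Penrose pseudoinverse. -/
def IsMoorePenrose {m n : ℕ} (P : Matrix (Fin m) (Fin n) ℝ)
    (Pp : Matrix (Fin n) (Fin m) ℝ) : Prop :=
  P * Pp * P = P ∧ Pp * P * Pp = Pp ∧ (P * Pp)ᵀ = P * Pp ∧ (Pp * P)ᵀ = Pp * P

/-- The Euclidean norm `‖v‖₂ = √(vᵀv)`. -/
noncomputable def enorm2 {m : ℕ} (v : Fin m → ℝ) : ℝ := Real.sqrt (v ⬝ᵥ v)

/-- The sequence of reduced vectors `x_0 = x`, `x_ℓ = P_ℓ x_{ℓ-1}`. -/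
def xs {dims : ℕ → ℕ} (P : ∀ ℓ, Matrix (Fin (dims (ℓ + 1))) (Fin (dims ℓ)) ℝ)
    (x0 : Fin (dims 0) → ℝ) : ∀ ℓ, Fin (dims ℓ) → ℝ
  | 0 => x0
  | ℓ + 1 => P ℓ *ᵥ xs P x0 ℓ

lemma enorm2_eq {m : ℕ} (v : Fin m → ℝ) :
    enorm2 v = ‖(WithLp.equiv 2 (Fin m → ℝ)).symm v‖ := by
  rw [EuclideanSpace.norm_eq, enorm2, dotProduct]
  congr 1
  apply Finset.sum_congr rfl
  intro i _
  simp [sq_abs, sq]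

lemma enorm2_nonneg {m : ℕ} (v : Fin m → ℝ) : 0 ≤ enorm2 v := by
  rw [enorm2_eq]; exact norm_nonneg _

lemma enorm2_sub_le {m : ℕ} (u v w : Fin m → ℝ) :
    enorm2 (u - w) ≤ enorm2 (u - v) + enorm2 (v - w) := by
  simp only [enorm2_eq]
  have : (WithLp.equiv 2 (Fin m → ℝ)).symm (u - w) =
      (WithLp.equiv 2 (Fin m → ℝ)).symm (u - v) + (WithLp.equiv 2 (Fin m → ℝ)).symm (v - w) := by
    simp [sub_add_sub_cancel]
  rw [this]
  exact norm_add_le _ _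

lemma enorm2_le_add {m : ℕ} (u v : Fin m → ℝ) :
    enorm2 v ≤ enorm2 u + enorm2 (u - v) := by
  simp only [enorm2_eq]
  have : (WithLp.equiv 2 (Fin m → ℝ)).symm v =
      (WithLp.equiv 2 (Fin m → ℝ)).symm u - (WithLp.equiv 2 (Fin m → ℝ)).symm (u - v) := by
    simp
  rw [this]
  exact norm_sub_le _ _

/-- Multi-level error bound: if at each level
`‖S_{ℓ-1} Π⊥_ℓ x_{ℓ-1}‖₂ ≤ σ_ℓ ‖S_{ℓ-1} x_{ℓ-1}‖₂` and `S_ℓ x_ℓ = S_{ℓ-1} Π_ℓ x_{ℓ-1}`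
(where `Π_ℓ = P_ℓ⁺ P_ℓ`), then
`‖S₀x₀ − S_c x_c‖₂ ≤ (∏_{ℓ=1}^c (1 + σ_ℓ) − 1) ‖S₀ x₀‖₂`. -/
theorem multilevel_error {dims : ℕ → ℕ} {M : ℕ} (c : ℕ)
    (P : ∀ ℓ, Matrix (Fin (dims (ℓ + 1))) (Fin (dims ℓ)) ℝ)
    (Pp : ∀ ℓ, Matrix (Fin (dims ℓ)) (Fin (dims (ℓ + 1))) ℝ)
    (hMP : ∀ ℓ < c, IsMoorePenrose (P ℓ) (Pp ℓ))
    (S : ∀ ℓ, Matrix (Fin M) (Fin (dims ℓ)) ℝ)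
    (x0 : Fin (dims 0) → ℝ)
    (σ : ℕ → ℝ) (hσ : ∀ ℓ, 0 ≤ σ ℓ)
    (hcompat : ∀ ℓ < c,
      S (ℓ + 1) *ᵥ xs P x0 (ℓ + 1) = S ℓ *ᵥ ((Pp ℓ * P ℓ) *ᵥ xs P x0 ℓ))
    (hlevel : ∀ ℓ < c,
      enorm2 (S ℓ *ᵥ ((1 - Pp ℓ * P ℓ) *ᵥ xs P x0 ℓ)) ≤ σ ℓ * enorm2 (S ℓ *ᵥ xs P x0 ℓ)) :
    enorm2 (S 0 *ᵥ x0 - S c *ᵥ xs P x0 c) ≤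
      ((∏ ℓ ∈ Finset.range c, (1 + σ ℓ)) - 1) * enorm2 (S 0 *ᵥ x0) := by
  induction c with
  | zero => simp [xs, enorm2]
  | succ c ih =>
    have ihc := ih (fun ℓ hℓ => hMP ℓ (Nat.lt_succ_of_lt hℓ))
      (fun ℓ hℓ => hcompat ℓ (Nat.lt_succ_of_lt hℓ))
      (fun ℓ hℓ => hlevel ℓ (Nat.lt_succ_of_lt hℓ))
    -- step difference
    have hstep : S c *ᵥ xs P x0 c - S (c + 1) *ᵥ xs P x0 (c + 1)
        = S c *ᵥ ((1 - Pp c * P c) *ᵥ xs P x0 c) := by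
      rw [hcompat c (Nat.lt_succ_self c)]
      rw [Matrix.sub_mulVec, Matrix.one_mulVec, Matrix.mulVec_sub]
    have hσc := hσ c
    have hprodpos : (0:ℝ) ≤ ∏ ℓ ∈ Finset.range c, (1 + σ ℓ) :=
      Finset.prod_nonneg fun ℓ _ => by linarith [hσ ℓ]
    have h0 : (0:ℝ) ≤ enorm2 (S 0 *ᵥ x0) := enorm2_nonneg _
    -- ‖e_c‖ ≤ (∏) ‖e_0‖
    have hec : enorm2 (S c *ᵥ xs P x0 c) ≤
        (∏ ℓ ∈ Finset.range c, (1 + σ ℓ)) * enorm2 (S 0 *ᵥ x0) := by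
      have := enorm2_le_add (S 0 *ᵥ x0) (S c *ᵥ xs P x0 c)
      nlinarith [ihc]
    have htri := enorm2_sub_le (S 0 *ᵥ x0) (S c *ᵥ xs P x0 c) (S (c + 1) *ᵥ xs P x0 (c + 1))
    have hlev := hlevel c (Nat.lt_succ_self c)
    rw [← hstep] at hlev
    rw [Finset.prod_range_succ]
    nlinarith [mul_le_mul_of_nonneg_left hec hσc]
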